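/- Let $\sigma > 0$, $\bar\kappa > 0$, and for $t \geq 0$ let $w_t \geq 2\sigma^2$ be such that $w_t \leq w_{t-1}$, and define $\eta_t = \bar\kappa/(w_t + \sigma^2 t)^{1/3}$. If moreover $\eta_t \leq 1/L$ for some $L > 0$, then $\eta_t^{-1} - \eta_{t-1}^{-1} \leq \frac{2^{2/3} \sigma^2}{3 L \bar\kappa^3}\eta_t$ for all $t \geq 1$. -/

import Mathlib

set_option maxHeartbeats 2000000 in
theorem stmt_18 (σ κ L : ℝ) (hσ : 0 < σ) (hκ : 0 < κ) (hL : 0 < L)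
    (w η : ℕ → ℝ) (hw : ∀ t, 2 * σ ^ 2 ≤ w t)
    (hwmono : ∀ t, 1 ≤ t → w t ≤ w (t - 1))
    (hη : ∀ t, η t = κ / (w t + σ ^ 2 * t) ^ ((1 : ℝ) / 3))
    (hηL : ∀ t, η t ≤ 1 / L) :
    ∀ t, 1 ≤ t → (η t)⁻¹ - (η (t - 1))⁻¹ ≤ (2 : ℝ) ^ ((2 : ℝ) / 3) * σ ^ 2 / (3 * L * κ ^ 3) * η t := by
  intro t ht
  have hσ2 : 0 < σ ^ 2 := by positivity
  have htc : ((t - 1 : ℕ) : ℝ) = (t : ℝ) - 1 := by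
    rw [Nat.cast_sub ht]; norm_num
  have ht1 : (1 : ℝ) ≤ (t : ℝ) := by exact_mod_cast ht
  set x : ℝ := w (t - 1) + σ ^ 2 * ((t : ℝ) - 1) with hxdef
  set B : ℝ := w t + σ ^ 2 * (t : ℝ) with hBdef
  have hx : 0 < x := by nlinarith [hw (t - 1)]
  have hB : 0 < B := by nlinarith [hw t]
  have hBx : B ≤ x + σ ^ 2 := by nlinarith [hwmono t ht]
  have hB2x : B ≤ 2 * x := by nlinarith [hwmono t ht, hw t]
  set u : ℝ := x ^ ((1 : ℝ) / 3) with hudef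
  set v : ℝ := B ^ ((1 : ℝ) / 3) with hvdef
  set s : ℝ := (x + σ ^ 2) ^ ((1 : ℝ) / 3) with hsdef
  have hu : 0 < u := Real.rpow_pos_of_pos hx _
  have hv : 0 < v := Real.rpow_pos_of_pos hB _
  have hs : 0 < s := Real.rpow_pos_of_pos (by linarith) _
  have hu3 : u ^ 3 = x := by
    rw [hudef, ← Real.rpow_natCast (x ^ ((1:ℝ)/3)) 3, ← Real.rpow_mul hx.le]; norm_num
  have hv3 : v ^ 3 = B := by
    rw [hvdef, ← Real.rpow_natCast (B ^ ((1:ℝ)/3)) 3, ← Real.rpow_mul hB.le]; norm_num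
  have hs3 : s ^ 3 = x + σ ^ 2 := by
    rw [hsdef, ← Real.rpow_natCast ((x + σ^2) ^ ((1:ℝ)/3)) 3,
      ← Real.rpow_mul (by linarith : (0:ℝ) ≤ x + σ ^ 2)]; norm_num
  have hvs : v ≤ s := Real.rpow_le_rpow hB.le hBx (by norm_num)
  have hus : u ≤ s := Real.rpow_le_rpow hx.le (by linarith) (by norm_num)
  -- concavity bound : 3 u^2 (s - u) ≤ σ^2
  have hkey : 3 * u ^ 2 * (s - u) ≤ σ ^ 2 := by
    have h0 : 0 ≤ (s - u) ^ 2 * (s + 2 * u) := by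
      have := sub_nonneg.2 hus
      positivity
    nlinarith [h0, hu3, hs3]
  have h1 : 3 * u ^ 2 * (v - u) ≤ σ ^ 2 := by nlinarith [hvs, sq_nonneg u, hu]
  set c : ℝ := (2 : ℝ) ^ ((2 : ℝ) / 3) with hcdef
  have hc : 0 < c := Real.rpow_pos_of_pos (by norm_num) _
  -- v^2 ≤ c * u^2
  have hv2 : v ^ 2 ≤ c * u ^ 2 := by
    have h2x : v ≤ (2 * x) ^ ((1:ℝ)/3) := Real.rpow_le_rpow hB.le hB2x (by norm_num)
    have hmul : (2 * x) ^ ((1:ℝ)/3) = (2:ℝ) ^ ((1:ℝ)/3) * u := by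
      rw [hudef, Real.mul_rpow (by norm_num) hx.le]
    have hc1 : ((2:ℝ) ^ ((1:ℝ)/3)) ^ 2 = c := by
      rw [hcdef, ← Real.rpow_natCast ((2:ℝ) ^ ((1:ℝ)/3)) 2, ← Real.rpow_mul (by norm_num)]
      norm_num
    have hvle : v ≤ (2:ℝ) ^ ((1:ℝ)/3) * u := by rw [← hmul]; exact h2x
    calc v ^ 2 ≤ ((2:ℝ) ^ ((1:ℝ)/3) * u) ^ 2 := by
          apply pow_le_pow_left₀ hv.le hvle
      _ = c * u ^ 2 := by rw [mul_pow, hc1]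
    -- done
  have hηt : η t = κ / v := by rw [hη t]
  have hηt1 : η (t - 1) = κ / u := by rw [hη (t - 1), htc]
  have hLv : L * κ ≤ v := by
    have := hηL t
    rw [hηt] at this
    rw [div_le_div_iff₀ hv hL] at this
    linarith
  clear_value x B u v s c
  rw [hηt, hηt1, inv_div, inv_div]
  rcases le_or_gt u v with hvu | hvu
  · rw [show c * σ ^ 2 / (3 * L * κ ^ 3) * (κ / v) = c * σ ^ 2 * κ / (3 * L * κ ^ 2 * v * κ) from by
        field_simp,
      show v / κ - u / κ = (v - u) / κ from by ring,
      div_le_div_iff₀ hκ (by positivity)]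
    have s1 : 3 * v ^ 2 * (v - u) ≤ c * σ ^ 2 := by
      nlinarith [mul_le_mul_of_nonneg_right hv2 (sub_nonneg.2 hvu),
        mul_le_mul_of_nonneg_left h1 hc.le]
    have s2 : 3 * (L * κ) * v * (v - u) ≤ c * σ ^ 2 := by
      nlinarith [mul_le_mul_of_nonneg_right hLv
        (mul_nonneg (by norm_num : (0:ℝ) ≤ 3) (mul_nonneg hv.le (sub_nonneg.2 hvu)))]
    nlinarith [mul_le_mul_of_nonneg_right s2 (mul_nonneg hκ.le hκ.le)]
  · have hneg : v / κ - u / κ ≤ 0 :=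
      sub_nonpos.2 ((div_le_div_iff_of_pos_right hκ).2 hvu.le)
    have hpos : 0 ≤ c * σ ^ 2 / (3 * L * κ ^ 3) * (κ / v) := by positivity
    linarith
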